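/- Let D be a nonnegative random variable bounded above by M > 0, with E[D] = δ ∈ (0, M). Then for all η ∈ (0, δ), P(D < η) ≤ (δ(M−δ) + 2ηδ)/(δ(M−δ) + δ²) = (M − δ + 2η)/M. -/

import Mathlib

open MeasureTheory ProbabilityTheory

/-- Theorem 1 combined with the Bhatia–Davis inequality: for a random
variable `D` with values in `[0, M]` and mean `δ ∈ (0, M)`, and `η ∈ (0, δ)`,
`P(D < η) ≤ (M - δ + 2η)/M`. -/
theorem skd_bhatia_davis_bound {Ω : Type*} [MeasureSpace Ω]
    [IsProbabilityMeasure (ℙ : Measure Ω)]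
    (D : Ω → ℝ) (hmeas : Measurable D)
    (M δ η : ℝ) (hM : 0 < M) (hbdd : ∀ᵐ ω ∂ℙ, D ω ∈ Set.Icc 0 M)
    (hmean : ∫ ω, D ω ∂ℙ = δ) (hδ0 : 0 < δ) (hδM : δ < M)
    (hη : 0 < η) (hηδ : η < δ) :
    (ℙ {ω | D ω < η}).toReal ≤ (M - δ + 2 * η) / M := by
  set A := {ω | D ω < η} with hA
  have hAmeas : MeasurableSet A := measurableSet_lt hmeas measurable_const
  have hint : Integrable D ℙ := by
    apply Integrable.mono' (integrable_const M) hmeas.aestronglyMeasurable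
    filter_upwards [hbdd] with ω hω
    rw [Real.norm_eq_abs, abs_le]
    exact ⟨by linarith [hω.1], hω.2⟩
  set p := (ℙ A).toReal with hp
  have hp1 : p ≤ 1 := by
    rw [hp]
    exact ENNReal.toReal_le_of_le_ofReal one_pos.le (by simpa using prob_le_one)
  have hp0 : 0 ≤ p := ENNReal.toReal_nonneg
  have hcompl : (ℙ Aᶜ).toReal = 1 - p := by
    rw [prob_compl_eq_one_sub hAmeas, ENNReal.toReal_sub_of_le prob_le_one ENNReal.one_ne_top]
    simp [hp]
  have h1 : ∫ ω in A, D ω ∂ℙ ≤ η * p := by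
    have := setIntegral_mono_on hint.integrableOn
      (integrable_const η).integrableOn hAmeas (fun ω hω => le_of_lt hω)
    simpa [mul_comm, measureReal_def, hp] using this
  have h2 : ∫ ω in Aᶜ, D ω ∂ℙ ≤ M * (1 - p) := by
    have hb : ∀ᵐ ω ∂((ℙ : Measure Ω).restrict Aᶜ), D ω ≤ M :=
      ae_restrict_of_ae (hbdd.mono fun ω h => h.2)
    have := integral_mono_ae hint.integrableOn (integrable_const M).integrableOn hb
    simpa [measureReal_def, hcompl, mul_comm] using this
  have hsplit : δ ≤ η * p + M * (1 - p) := by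
    have := integral_add_compl hAmeas hint
    rw [hmean] at this
    linarith [h1, h2, this.ge, this.le]
  rw [le_div_iff₀ hM]
  nlinarith [mul_le_of_le_one_left hη.le hp1]
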